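/- Let Ω ⊆ ℝ^N be measurable, G a C¹ Orlicz function with Δ₂-constant K > 2, derivative g satisfying g(a)·a ≤ p·G(a) for some p > 1, and C' > 0 the constant from the Young-type estimate. If (u_n) is a sequence of measurable functions with u_n → u a.e., sup_n ∫_Ω G(|u_n − u|) dx ≤ M < ∞ and ∫_Ω G(|u|/ε) dx < ∞ for every ε ∈ (0,1), then for every ε ∈ (0,1): limsup_{n→∞} ∫_Ω |G(|u_n|) − G(|u_n − u|) − G(|u|)| dx ≤ ε·(C·K²/2)·M, where C = max(p−1,1). -/
import Mathlib


open MeasureTheory Filter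

/-- Key pointwise Young-type estimate for Orlicz functions. -/
lemma brezis_lieb_key_pointwise (G g : ℝ → ℝ) (K p : ℝ)
    (hconv : ConvexOn ℝ (Set.Ici 0) G)
    (hmono : MonotoneOn G (Set.Ici 0))
    (hG0 : G 0 = 0)
    (hC1 : ∀ t : ℝ, 0 < t → HasDerivAt G (g t) t)
    (hK : 2 < K)
    (hΔ2 : ∀ x : ℝ, 0 ≤ x → G (2 * x) ≤ K * G x)
    (hp : 1 < p)
    (hgrowth : ∀ a : ℝ, 0 < a → g a * a ≤ p * G a)
    (ε s t b : ℝ) (hε : 0 < ε) (hε1 : ε < 1)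
    (hs : 0 ≤ s) (ht : 0 ≤ t) (hb : 0 ≤ b) (hst : |s - t| ≤ b) :
    |G s - G t| ≤ ε * (max (p - 1) 1 * K ^ 2 / 2) * G t
      + (max (p - 1) 1 * K ^ 2) * G (b / ε) := by
  have hC1' : (1:ℝ) ≤ max (p - 1) 1 := le_max_right _ _
  have hC0 : (0:ℝ) ≤ max (p - 1) 1 := by linarith
  have hK0 : (0:ℝ) < K := by linarith
  have hGnn : ∀ x : ℝ, 0 ≤ x → 0 ≤ G x := by
    intro x hx
    have := hmono Set.self_mem_Ici (Set.mem_Ici.2 hx) hx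
    simpa [hG0] using this
  have hgnn : ∀ x : ℝ, 0 < x → 0 ≤ g x := by
    intro x hx
    have h1 := hconv.slope_le_of_hasDerivAt Set.self_mem_Ici (Set.mem_Ici.2 hx.le) hx
      (hC1 x hx)
    rw [slope_def_field] at h1
    have h2 : 0 ≤ (G x - G 0) / (x - 0) := by
      apply div_nonneg _ (by linarith)
      simp [hG0, hGnn x hx.le]
    linarith
  have hlip : ∀ x y : ℝ, 0 ≤ x → x < y → G y - G x ≤ g y * (y - x) := by
    intro x y hx hxy
    have hy : 0 < y := lt_of_le_of_lt hx hxy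
    have h1 := hconv.slope_le_of_hasDerivAt (Set.mem_Ici.2 hx) (Set.mem_Ici.2 hy.le) hxy
      (hC1 y hy)
    rw [slope_def_field] at h1
    have hyx : 0 < y - x := sub_pos.2 hxy
    calc G y - G x = ((G y - G x) / (y - x)) * (y - x) := by field_simp
      _ ≤ g y * (y - x) := mul_le_mul_of_nonneg_right h1 hyx.le
  have hgm : ∀ x y : ℝ, 0 < x → x ≤ y → g x ≤ g y := by
    intro x y hx hxy
    rcases hxy.eq_or_lt with h | h
    · exact le_of_eq (by rw [h])
    have hy : 0 < y := hx.trans h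
    have ha := hconv.le_slope_of_hasDerivAt (Set.mem_Ici.2 hx.le) (Set.mem_Ici.2 hy.le) h
      (hC1 x hx)
    have hb' := hconv.slope_le_of_hasDerivAt (Set.mem_Ici.2 hx.le) (Set.mem_Ici.2 hy.le) h
      (hC1 y hy)
    exact ha.trans hb'
  have hbε : 0 ≤ b / ε := div_nonneg hb hε.le
  have hGbε : 0 ≤ G (b / ε) := hGnn _ hbε
  by_cases hcase : 0 < t ∧ b ≤ ε * t
  · obtain ⟨ht0, hbt⟩ := hcase
    have hm0 : 0 < max s t := lt_of_lt_of_le ht0 (le_max_right s t)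
    have hmi0 : 0 ≤ min s t := le_min hs ht
    have ht2 : 0 < 2 * t := by linarith
    have habs : |G s - G t| = G (max s t) - G (min s t) := by
      rcases le_total s t with h | h
      · rw [max_eq_right h, min_eq_left h,
          abs_of_nonpos (sub_nonpos.2 (hmono (Set.mem_Ici.2 hs) (Set.mem_Ici.2 ht) h))]
        ring
      · rw [max_eq_left h, min_eq_right h,
          abs_of_nonneg (sub_nonneg.2 (hmono (Set.mem_Ici.2 ht) (Set.mem_Ici.2 hs) h))]
    have hmb : G (max s t) - G (min s t) ≤ g (max s t) * b := by
      rcases (min_le_max : min s t ≤ max s t).eq_or_lt with h | h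
      · rw [h]
        simpa using mul_nonneg (hgnn _ hm0) hb
      · have h1 := hlip (min s t) (max s t) hmi0 h
        have h2 : max s t - min s t = |s - t| := by
          rw [max_sub_min_eq_abs, abs_sub_comm]
        rw [h2] at h1
        exact h1.trans (mul_le_mul_of_nonneg_left hst (hgnn _ hm0))
    have hm2t : max s t ≤ 2 * t := by
      have hs2 : s - t ≤ b := (abs_le.1 hst).2
      have : b ≤ t := by nlinarith
      apply max_le (by linarith) (by linarith)
    have hg2t : g (max s t) ≤ g (2 * t) := hgm _ _ hm0 hm2t
    have hch : p * K ≤ max (p - 1) 1 * K ^ 2 := by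
      have hpC : p ≤ 2 * max (p - 1) 1 := by
        rcases le_total p 2 with h | h
        · linarith [le_max_right (p - 1) (1:ℝ)]
        · have : p - 1 ≤ max (p - 1) 1 := le_max_left _ _
          linarith
      have h1 : p * K ≤ 2 * max (p - 1) 1 * K := by
        apply mul_le_mul_of_nonneg_right hpC hK0.le
      nlinarith [mul_nonneg (mul_nonneg hC0 hK0.le) (by linarith : (0:ℝ) ≤ K - 2)]
    have hGt := hGnn t ht
    have hstep : (ε / 2) * (p * (K * G t)) ≤ ε * (max (p - 1) 1 * K ^ 2 / 2) * G t := by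
      have h4 := mul_le_mul_of_nonneg_left hch (mul_nonneg hε.le hGt)
      nlinarith [h4]
    calc |G s - G t| = G (max s t) - G (min s t) := habs
      _ ≤ g (max s t) * b := hmb
      _ ≤ g (2 * t) * b := mul_le_mul_of_nonneg_right hg2t hb
      _ ≤ g (2 * t) * (ε * t) := mul_le_mul_of_nonneg_left hbt (hgnn _ ht2)
      _ = (ε / 2) * (g (2 * t) * (2 * t)) := by ring
      _ ≤ (ε / 2) * (p * G (2 * t)) :=
          mul_le_mul_of_nonneg_left (hgrowth _ ht2) (by linarith)
      _ ≤ (ε / 2) * (p * (K * G t)) := by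
          have := hΔ2 t ht
          have hp0 : (0:ℝ) ≤ p := by linarith
          apply mul_le_mul_of_nonneg_left _ (by linarith : (0:ℝ) ≤ ε / 2)
          exact mul_le_mul_of_nonneg_left this hp0
      _ ≤ ε * (max (p - 1) 1 * K ^ 2 / 2) * G t := hstep
      _ ≤ ε * (max (p - 1) 1 * K ^ 2 / 2) * G t + (max (p - 1) 1 * K ^ 2) * G (b / ε) := by
          nlinarith [mul_nonneg (mul_nonneg hC0 (sq_nonneg K)) hGbε]
  · push_neg at hcase
    have htb : t ≤ b / ε := by
      rcases lt_or_ge 0 t with h | h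
      · have := hcase h
        rw [le_div_iff₀ hε]
        nlinarith
      · have ht0 : t = 0 := le_antisymm h ht
        rw [ht0]
        exact hbε
    have hbb : b ≤ b / ε := by
      rw [le_div_iff₀ hε]
      nlinarith
    have hsb : s ≤ 2 * (b / ε) := by
      have h1 : s - t ≤ b := (abs_le.1 hst).2
      linarith
    have htb2 : t ≤ 2 * (b / ε) := by linarith
    have h2b : (0:ℝ) ≤ 2 * (b / ε) := by linarith
    have hGs : G s ≤ K * G (b / ε) :=
      (hmono (Set.mem_Ici.2 hs) (Set.mem_Ici.2 h2b) hsb).trans (hΔ2 _ hbε)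
    have hGt : G t ≤ K * G (b / ε) :=
      (hmono (Set.mem_Ici.2 ht) (Set.mem_Ici.2 h2b) htb2).trans (hΔ2 _ hbε)
    have habs : |G s - G t| ≤ G s + G t := by
      have h1 : |G s - G t| ≤ |G s| + |G t| := abs_sub _ _
      rw [abs_of_nonneg (hGnn s hs), abs_of_nonneg (hGnn t ht)] at h1
      exact h1
    have h2K : 2 * K ≤ max (p - 1) 1 * K ^ 2 := by
      nlinarith [mul_nonneg (by linarith : (0:ℝ) ≤ max (p - 1) 1 - 1) (sq_nonneg K)]
    have h4 : (2 * K) * G (b / ε) ≤ (max (p - 1) 1 * K ^ 2) * G (b / ε) :=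
      mul_le_mul_of_nonneg_right h2K hGbε
    have h5 : G s + G t ≤ (2 * K) * G (b / ε) := by
      have h6 : (2 * K) * G (b / ε) = K * G (b / ε) + K * G (b / ε) := by ring
      linarith
    have h3 : 0 ≤ ε * (max (p - 1) 1 * K ^ 2 / 2) * G t :=
      mul_nonneg (mul_nonneg hε.le
        (div_nonneg (mul_nonneg hC0 (sq_nonneg K)) (by norm_num))) (hGnn t ht)
    linarith

theorem brezis_lieb_limsup_estimate (N : ℕ) (Ω : Set (EuclideanSpace ℝ (Fin N)))
    (hΩ : MeasurableSet Ω)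
    (G g : ℝ → ℝ) (K p M : ℝ)
    (hcont : ContinuousOn G (Set.Ici 0))
    (hconv : ConvexOn ℝ (Set.Ici 0) G)
    (hmono : MonotoneOn G (Set.Ici 0))
    (hG0 : G 0 = 0)
    (hC1 : ∀ t : ℝ, 0 < t → HasDerivAt G (g t) t)
    (hgcont : ContinuousOn g (Set.Ioi 0))
    (hK : 2 < K)
    (hΔ2 : ∀ x : ℝ, 0 ≤ x → G (2 * x) ≤ K * G x)
    (hp : 1 < p)
    (hgrowth : ∀ a : ℝ, 0 < a → g a * a ≤ p * G a)
    (u : (EuclideanSpace ℝ (Fin N)) → ℝ) (un : ℕ → (EuclideanSpace ℝ (Fin N)) → ℝ)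
    (hmeas : ∀ n, AEMeasurable (un n) (volume.restrict Ω))
    (humeas : AEMeasurable u (volume.restrict Ω))
    (hae : ∀ᵐ x ∂(volume.restrict Ω), Tendsto (fun n => un n x) atTop (nhds (u x)))
    (hMbd : ∀ n, (∫ x in Ω, G |un n x - u x|) ≤ M)
    (hMint : ∀ n, IntegrableOn (fun x => G |un n x - u x|) Ω volume)
    (huint : ∀ ε : ℝ, ε ∈ Set.Ioo (0:ℝ) 1 →
      IntegrableOn (fun x => G (|u x| / ε)) Ω volume) :
    ∀ ε : ℝ, ε ∈ Set.Ioo (0:ℝ) 1 →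
      Filter.limsup (fun n => ∫ x in Ω, abs (G (|un n x|) - G (|un n x - u x|) - G (|u x|))) atTop
        ≤ ε * (max (p - 1) 1 * K ^ 2 / 2) * M := by
  intro ε hεmem
  obtain ⟨hε0, hε1⟩ := hεmem
  have hC1' : (1:ℝ) ≤ max (p - 1) 1 := le_max_right _ _
  have hC0 : (0:ℝ) ≤ max (p - 1) 1 := by linarith
  have hK0 : (0:ℝ) < K := by linarith
  have hc0 : (0:ℝ) ≤ ε * (max (p - 1) 1 * K ^ 2 / 2) :=
    mul_nonneg hε0.le (by positivity)
  have hGnn : ∀ x : ℝ, 0 ≤ x → 0 ≤ G x := by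
    intro x hx
    have := hmono Set.self_mem_Ici (Set.mem_Ici.2 hx) hx
    simpa [hG0] using this
  -- continuous extension of G
  have hGmcont : Continuous (fun r : ℝ => G (max r 0)) :=
    hcont.comp_continuous (continuous_id.max continuous_const)
      (fun x => Set.mem_Ici.2 (le_max_right _ _))
  have habsmax : ∀ r : ℝ, max |r| 0 = |r| := fun r => max_eq_left (abs_nonneg r)
  have hGcomp : ∀ v : (EuclideanSpace ℝ (Fin N)) → ℝ, AEMeasurable v (volume.restrict Ω) →
      AEMeasurable (fun x => G |v x|) (volume.restrict Ω) := by
    intro v hv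
    have heq : (fun x => G |v x|) = (fun r : ℝ => G (max r 0)) ∘ (fun x => |v x|) := by
      funext x
      simp [habsmax]
    rw [heq]
    exact hGmcont.measurable.comp_aemeasurable (continuous_abs.measurable.comp_aemeasurable hv)
  -- a.e.-measurability of the pieces
  have hms : ∀ n, AEMeasurable (fun x => G |un n x|) (volume.restrict Ω) :=
    fun n => hGcomp _ (hmeas n)
  have hmt : ∀ n, AEMeasurable (fun x => G |un n x - u x|) (volume.restrict Ω) :=
    fun n => hGcomp _ ((hmeas n).sub humeas)
  have hmb : AEMeasurable (fun x => G |u x|) (volume.restrict Ω) := hGcomp _ humeas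
  have hmF : ∀ n, AEMeasurable
      (fun x => abs (G |un n x| - G |un n x - u x| - G |u x|)) (volume.restrict Ω) :=
    fun n => continuous_abs.measurable.comp_aemeasurable (((hms n).sub (hmt n)).sub hmb)
  have hmW : ∀ n, AEMeasurable
      (fun x => max (abs (G |un n x| - G |un n x - u x| - G |u x|)
        - ε * (max (p - 1) 1 * K ^ 2 / 2) * G |un n x - u x|) 0) (volume.restrict Ω) :=
    fun n => ((hmF n).sub ((hmt n).const_mul _)).max aemeasurable_const
  -- the dominating function
  have hDint : Integrable (fun x => (max (p - 1) 1 * K ^ 2 + 1) * G (|u x| / ε))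
      (volume.restrict Ω) := (huint ε ⟨hε0, hε1⟩).const_mul _
  -- key pointwise estimate
  have hkey : ∀ n x, abs (G |un n x| - G |un n x - u x|)
      ≤ ε * (max (p - 1) 1 * K ^ 2 / 2) * G |un n x - u x|
        + (max (p - 1) 1 * K ^ 2) * G (|u x| / ε) := by
    intro n x
    apply brezis_lieb_key_pointwise G g K p hconv hmono hG0 hC1 hK hΔ2 hp hgrowth ε _ _ _
      hε0 hε1 (abs_nonneg _) (abs_nonneg _) (abs_nonneg _)
    simpa using abs_abs_sub_abs_le_abs_sub (un n x) (un n x - u x)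
  have hGbub : ∀ x : EuclideanSpace ℝ (Fin N), G |u x| ≤ G (|u x| / ε) := by
    intro x
    apply hmono (Set.mem_Ici.2 (abs_nonneg _))
      (Set.mem_Ici.2 (div_nonneg (abs_nonneg _) hε0.le))
    rw [le_div_iff₀ hε0]
    nlinarith [abs_nonneg (u x)]
  -- the truncation is dominated
  have hWD : ∀ n x, max (abs (G |un n x| - G |un n x - u x| - G |u x|)
        - ε * (max (p - 1) 1 * K ^ 2 / 2) * G |un n x - u x|) 0
      ≤ (max (p - 1) 1 * K ^ 2 + 1) * G (|u x| / ε) := by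
    intro n x
    have hDnn : 0 ≤ (max (p - 1) 1 * K ^ 2 + 1) * G (|u x| / ε) :=
      mul_nonneg (by positivity) (hGnn _ (div_nonneg (abs_nonneg _) hε0.le))
    apply max_le _ hDnn
    have h1 := hkey n x
    have h2 := hGbub x
    have h3 : abs (G |un n x| - G |un n x - u x| - G |u x|)
        ≤ abs (G |un n x| - G |un n x - u x|) + G |u x| := by
      have := abs_sub (G |un n x| - G |un n x - u x|) (G |u x|)
      rw [abs_of_nonneg (hGnn _ (abs_nonneg (u x)))] at this
      exact this
    linarith
  -- a.e. convergence of the truncation to 0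
  have hWtend : ∀ᵐ x ∂(volume.restrict Ω), Tendsto
      (fun n => max (abs (G |un n x| - G |un n x - u x| - G |u x|)
        - ε * (max (p - 1) 1 * K ^ 2 / 2) * G |un n x - u x|) 0) atTop (nhds 0) := by
    filter_upwards [hae] with x hx
    have hsx : Tendsto (fun n => |un n x|) atTop (nhds |u x|) := hx.abs
    have htx : Tendsto (fun n => |un n x - u x|) atTop (nhds 0) := by
      have h := (hx.sub (tendsto_const_nhds (x := u x))).abs
      simpa using h
    have hGs : Tendsto (fun n => G |un n x|) atTop (nhds (G |u x|)) := by
      have h := (hGmcont.tendsto |u x|).comp hsx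
      simpa [Function.comp_def, habsmax] using h
    have hGt : Tendsto (fun n => G |un n x - u x|) atTop (nhds 0) := by
      have h := (hGmcont.tendsto 0).comp htx
      simpa [Function.comp_def, habsmax, hG0] using h
    have h := (((hGs.sub hGt).sub (tendsto_const_nhds (x := G |u x|))).abs.sub
      (hGt.const_mul (ε * (max (p - 1) 1 * K ^ 2 / 2)))).max
      (tendsto_const_nhds (x := (0:ℝ)))
    simpa using h
  -- integrability of the truncation
  have hWint : ∀ n, Integrable (fun x => max (abs (G |un n x| - G |un n x - u x| - G |u x|)
      - ε * (max (p - 1) 1 * K ^ 2 / 2) * G |un n x - u x|) 0) (volume.restrict Ω) := by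
    intro n
    apply hDint.mono' (hmW n).aestronglyMeasurable
    apply Eventually.of_forall
    intro x
    rw [Real.norm_eq_abs, abs_of_nonneg (le_max_right _ _)]
    exact hWD n x
  -- dominated convergence
  have hWlim : Tendsto (fun n => ∫ x in Ω, max (abs (G |un n x| - G |un n x - u x| - G |u x|)
      - ε * (max (p - 1) 1 * K ^ 2 / 2) * G |un n x - u x|) 0) atTop (nhds 0) := by
    have h := tendsto_integral_of_dominated_convergence
      (μ := volume.restrict Ω)
      (F := fun n x => max (abs (G |un n x| - G |un n x - u x| - G |u x|)
        - ε * (max (p - 1) 1 * K ^ 2 / 2) * G |un n x - u x|) 0)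
      (f := fun _ => (0:ℝ))
      (fun x => (max (p - 1) 1 * K ^ 2 + 1) * G (|u x| / ε))
      (fun n => (hmW n).aestronglyMeasurable) hDint
      (fun n => Eventually.of_forall (fun x => by
        rw [Real.norm_eq_abs, abs_of_nonneg (le_max_right _ _)]
        exact hWD n x))
      hWtend
    simpa using h
  -- integrability of F n
  have hFint : ∀ n, Integrable
      (fun x => abs (G |un n x| - G |un n x - u x| - G |u x|)) (volume.restrict Ω) := by
    intro n
    apply ((hWint n).add ((hMint n).const_mul (ε * (max (p - 1) 1 * K ^ 2 / 2)))).mono'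
      (hmF n).aestronglyMeasurable
    apply Eventually.of_forall
    intro x
    rw [Real.norm_eq_abs, abs_abs]
    simp only [Pi.add_apply]
    have := le_max_left (abs (G |un n x| - G |un n x - u x| - G |u x|)
      - ε * (max (p - 1) 1 * K ^ 2 / 2) * G |un n x - u x|) (0:ℝ)
    linarith
  -- integral bound for each n
  have hAB : ∀ n, (∫ x in Ω, abs (G |un n x| - G |un n x - u x| - G |u x|))
      ≤ (∫ x in Ω, max (abs (G |un n x| - G |un n x - u x| - G |u x|)
          - ε * (max (p - 1) 1 * K ^ 2 / 2) * G |un n x - u x|) 0)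
        + ε * (max (p - 1) 1 * K ^ 2 / 2) * M := by
    intro n
    have h1 : (∫ x in Ω, abs (G |un n x| - G |un n x - u x| - G |u x|))
        ≤ ∫ x in Ω, (max (abs (G |un n x| - G |un n x - u x| - G |u x|)
          - ε * (max (p - 1) 1 * K ^ 2 / 2) * G |un n x - u x|) 0
          + ε * (max (p - 1) 1 * K ^ 2 / 2) * G |un n x - u x|) := by
      apply integral_mono (hFint n)
        ((hWint n).add ((hMint n).const_mul (ε * (max (p - 1) 1 * K ^ 2 / 2))))
      intro x
      have := le_max_left (abs (G |un n x| - G |un n x - u x| - G |u x|)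
        - ε * (max (p - 1) 1 * K ^ 2 / 2) * G |un n x - u x|) (0:ℝ)
      simp only [Pi.add_apply]
      linarith
    rw [integral_add (hWint n) ((hMint n).const_mul (ε * (max (p - 1) 1 * K ^ 2 / 2)))] at h1
    have h2 : (∫ x in Ω, ε * (max (p - 1) 1 * K ^ 2 / 2) * G |un n x - u x|)
        = ε * (max (p - 1) 1 * K ^ 2 / 2) * ∫ x in Ω, G |un n x - u x| :=
      integral_const_mul _ _
    rw [h2] at h1
    have h3 : ε * (max (p - 1) 1 * K ^ 2 / 2) * (∫ x in Ω, G |un n x - u x|)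
        ≤ ε * (max (p - 1) 1 * K ^ 2 / 2) * M :=
      mul_le_mul_of_nonneg_left (hMbd n) hc0
    linarith
  -- conclude via limsup
  have hBlim : Tendsto (fun n => (∫ x in Ω, max (abs (G |un n x| - G |un n x - u x| - G |u x|)
      - ε * (max (p - 1) 1 * K ^ 2 / 2) * G |un n x - u x|) 0)
      + ε * (max (p - 1) 1 * K ^ 2 / 2) * M) atTop
      (nhds (0 + ε * (max (p - 1) 1 * K ^ 2 / 2) * M)) :=
    hWlim.add tendsto_const_nhds
  have hcobdd : IsCoboundedUnder (· ≤ ·) atTop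
      (fun n => ∫ x in Ω, abs (G |un n x| - G |un n x - u x| - G |u x|)) :=
    isCoboundedUnder_le_of_le atTop (fun n => integral_nonneg (fun x => abs_nonneg _))
  have hbdd : IsBoundedUnder (· ≤ ·) atTop
      (fun n => (∫ x in Ω, max (abs (G |un n x| - G |un n x - u x| - G |u x|)
        - ε * (max (p - 1) 1 * K ^ 2 / 2) * G |un n x - u x|) 0)
        + ε * (max (p - 1) 1 * K ^ 2 / 2) * M) :=
    hBlim.isBoundedUnder_le
  have hfinal := limsup_le_limsup (Eventually.of_forall hAB) hcobdd hbdd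
  rw [hBlim.limsup_eq, zero_add] at hfinal
  exact hfinal
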